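/- Let p be a prime and let C be a nontrivial cyclic subgroup of (ℤ/p)². Then there exists a group homomorphism r : ℤ² → ℤ such that the kernel of the induced homomorphism (ℤ/p)² → ℤ/p obtained from r by reduction modulo p is exactly C, and such that the unique ℝ-linear extension r_ℝ : ℝ² → ℝ of r satisfies |r_ℝ(x₁) − r_ℝ(x₂)| ≤ √(2p) · ‖x₁ − x₂‖ for all x₁, x₂ ∈ ℝ². -/

import Mathlib

open scoped RealInnerProductSpace


/-- Thue-type lemma via pigeonhole. -/
lemma thue_aux (p : ℕ) (hp : p.Prime) (a : ZMod p) :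
    ∃ c d : ℤ, (c : ZMod p) = a * d ∧ (d : ZMod p) ≠ 0 ∧
      (c : ℝ)^2 ≤ p ∧ (d : ℝ)^2 ≤ p := by
  haveI : Fact p.Prime := ⟨hp⟩
  set k := Nat.sqrt p with hk
  have hkp : k < p := Nat.sqrt_lt_self hp.one_lt
  have hk2 : k * k ≤ p := by have := Nat.sqrt_le' p; nlinarith [Nat.sqrt_le' p]
  have hcardlt : Fintype.card (ZMod p) < Fintype.card (Fin (k+1) × Fin (k+1)) := by
    simp [ZMod.card]
    nlinarith [Nat.lt_succ_sqrt p]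
  obtain ⟨⟨x₁, y₁⟩, ⟨x₂, y₂⟩, hne, heq⟩ :=
    Fintype.exists_ne_map_eq_of_card_lt
      (fun q : Fin (k+1) × Fin (k+1) => ((q.1 : ℕ) : ZMod p) - a * ((q.2 : ℕ) : ZMod p))
      hcardlt
  have hx₁ : (x₁ : ℕ) ≤ k := Nat.lt_succ_iff.mp x₁.isLt
  have hx₂ : (x₂ : ℕ) ≤ k := Nat.lt_succ_iff.mp x₂.isLt
  have hy₁ : (y₁ : ℕ) ≤ k := Nat.lt_succ_iff.mp y₁.isLt
  have hy₂ : (y₂ : ℕ) ≤ k := Nat.lt_succ_iff.mp y₂.isLt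
  have habs : ∀ m n : ℕ, m ≤ k → n ≤ k → |(m : ℤ) - n| ≤ (k : ℤ) := by
    intro m n hm hn
    rw [abs_sub_le_iff]
    omega
  have hsq : ∀ m n : ℕ, m ≤ k → n ≤ k → (((m : ℤ) - n : ℤ) : ℝ)^2 ≤ p := by
    intro m n hm hn
    have h1 : |(m : ℤ) - n| ≤ (k : ℤ) := habs m n hm hn
    push_cast
    have h2 : |(m : ℝ) - n| ≤ (k : ℝ) := by exact_mod_cast h1
    have h3 : (k : ℝ) * k ≤ p := by exact_mod_cast hk2
    nlinarith [abs_nonneg ((m : ℝ) - n), sq_abs ((m : ℝ) - n)]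
  have hzero : ∀ m n : ℕ, m ≤ k → n ≤ k → (((m : ℤ) - n : ℤ) : ZMod p) = 0 → m = n := by
    intro m n hm hn h
    have := (ZMod.intCast_zmod_eq_zero_iff_dvd _ _).mp h
    have h1 : |(m : ℤ) - n| ≤ (k : ℤ) := habs m n hm hn
    rcases Int.eq_zero_of_abs_lt_dvd this (lt_of_le_of_lt h1 (by exact_mod_cast hkp)) with h0
    omega
  refine ⟨(x₁ : ℕ) - (x₂ : ℕ), (y₁ : ℕ) - (y₂ : ℕ), ?_, ?_, hsq _ _ hx₁ hx₂, hsq _ _ hy₁ hy₂⟩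
  · push_cast
    push_cast at heq
    linear_combination heq
  · intro h
    have hy : (y₁ : ℕ) = (y₂ : ℕ) := hzero _ _ hy₁ hy₂ h
    have hx : (x₁ : ℕ) = (x₂ : ℕ) := by
      apply hzero _ _ hx₁ hx₂
      push_cast
      push_cast at heq
      have hy' : ((y₁ : ℕ) : ZMod p) = ((y₂ : ℕ) : ZMod p) := by exact_mod_cast congrArg _ hy
      rw [hy'] at heq
      linear_combination heq
    exact hne (by simp [Prod.ext_iff, Fin.ext_iff, hx, hy])

/-- the smul lemma: ZMod p scalar multiples are in zmultiples -/
lemma zmod_smul_mem_zmultiples (p : ℕ) (hp : p.Prime) (t : ZMod p) (g : Fin 2 → ZMod p) :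
    (fun i => t * g i) ∈ AddSubgroup.zmultiples g := by
  haveI : NeZero p := ⟨hp.pos.ne'⟩
  refine ⟨(t.val : ℤ), ?_⟩
  funext i
  show ((t.val : ℤ) • g) i = t * g i
  rw [natCast_zsmul]
  simp [ZMod.natCast_val, ZMod.cast_id]

/-- Main construction given coefficients. -/
lemma main_construction (p : ℕ) (hp : p.Prime) (C : AddSubgroup (Fin 2 → ZMod p))
    (c d : ℤ) (hnorm : (c : ℝ)^2 + (d : ℝ)^2 ≤ 2 * p)
    (hker : ∀ x : Fin 2 → ZMod p, ((c : ZMod p) * x 0 + (d : ZMod p) * x 1 = 0) ↔ x ∈ C) :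
    ∃ r : (Fin 2 → ℤ) →+ ℤ,
      (∃ rbar : (Fin 2 → ZMod p) →+ ZMod p,
        (∀ x : Fin 2 → ℤ, rbar (fun i => (x i : ZMod p)) = ((r x : ℤ) : ZMod p)) ∧
        rbar.ker = C) ∧
      (∃ rR : EuclideanSpace ℝ (Fin 2) →ₗ[ℝ] ℝ,
        (∀ x : Fin 2 → ℤ, rR (WithLp.toLp 2 (fun i => (x i : ℝ))) = (r x : ℝ)) ∧
        ∀ x₁ x₂ : EuclideanSpace ℝ (Fin 2),
          |rR x₁ - rR x₂| ≤ Real.sqrt (2 * p) * ‖x₁ - x₂‖) := by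
  refine ⟨AddMonoidHom.mk' (fun x => c * x 0 + d * x 1) (by intro a b; simp [Pi.add_apply]; ring),
    ⟨AddMonoidHom.mk' (fun x => (c : ZMod p) * x 0 + (d : ZMod p) * x 1)
      (by intro a b; simp [Pi.add_apply]; ring), ?_, ?_⟩, ?_⟩
  · intro x; simp
  · ext x
    simp [AddMonoidHom.mem_ker]
    exact hker x
  · refine ⟨{ toFun := fun x => (c : ℝ) * x 0 + (d : ℝ) * x 1
              map_add' := by
                intro a b
                simp only [PiLp.add_apply]
                ring
              map_smul' := by
                intro m a
                simp only [PiLp.smul_apply, smul_eq_mul, RingHom.id_apply]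
                ring }, ?_, ?_⟩
    · intro x; simp
    · intro x₁ x₂
      have key : ∀ y : EuclideanSpace ℝ (Fin 2),
          |(c : ℝ) * y 0 + (d : ℝ) * y 1| ≤ Real.sqrt (2 * p) * ‖y‖ := by
        intro y
        set v : EuclideanSpace ℝ (Fin 2) := !₂[(c : ℝ), (d : ℝ)] with hv
        have hinner : (c : ℝ) * y 0 + (d : ℝ) * y 1 = (inner ℝ v y : ℝ) := by
          simp [PiLp.inner_apply, Fin.sum_univ_two, hv, RCLike.inner_apply, conj_trivial]
          ring
        rw [hinner]
        have h1 : |(inner ℝ v y : ℝ)| ≤ ‖v‖ * ‖y‖ := abs_real_inner_le_norm v y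
        have h2 : ‖v‖ ≤ Real.sqrt (2 * p) := by
          rw [EuclideanSpace.norm_eq]
          apply Real.sqrt_le_sqrt
          simp [Fin.sum_univ_two, hv]
          nlinarith [sq_abs (c:ℝ), sq_abs (d:ℝ)]
        calc |(inner ℝ v y : ℝ)| ≤ ‖v‖ * ‖y‖ := h1
          _ ≤ Real.sqrt (2 * p) * ‖y‖ := by
              apply mul_le_mul_of_nonneg_right h2 (norm_nonneg y)
      have hsub : ∀ y z : EuclideanSpace ℝ (Fin 2),
          ((c : ℝ) * y 0 + d * y 1) - ((c : ℝ) * z 0 + d * z 1)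
            = (c : ℝ) * (y - z) 0 + d * (y - z) 1 := by
        intro y z; simp [PiLp.sub_apply]; ring
      show |((c : ℝ) * x₁ 0 + d * x₁ 1) - ((c : ℝ) * x₂ 0 + d * x₂ 1)| ≤ _
      rw [hsub]
      exact key (x₁ - x₂)

/-- Let `p` be a prime and let `C` be a nontrivial cyclic subgroup of
`(ℤ/p)²`.  Then there exists a group homomorphism `r : ℤ² → ℤ` such that the kernel of the
induced homomorphism `(ℤ/p)² → ℤ/p` (obtained from `r` by reduction modulo `p`) is exactly
`C`, and such that the unique `ℝ`-linear extension `r_ℝ : ℝ² → ℝ` of `r` satisfies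
`|r_ℝ(x₁) − r_ℝ(x₂)| ≤ √(2p) · ‖x₁ − x₂‖` for all `x₁, x₂ ∈ ℝ²` (Euclidean norm). -/
theorem exists_hom_ker_eq_cyclic_subgroup_and_lipschitz
    (p : ℕ) (hp : p.Prime) (C : AddSubgroup (Fin 2 → ZMod p))
    (hC : IsAddCyclic C) (hCne : C ≠ ⊥) :
    ∃ r : (Fin 2 → ℤ) →+ ℤ,
      (∃ rbar : (Fin 2 → ZMod p) →+ ZMod p,
        (∀ x : Fin 2 → ℤ, rbar (fun i => (x i : ZMod p)) = ((r x : ℤ) : ZMod p)) ∧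
        rbar.ker = C) ∧
      (∃ rR : EuclideanSpace ℝ (Fin 2) →ₗ[ℝ] ℝ,
        (∀ x : Fin 2 → ℤ, rR (WithLp.toLp 2 (fun i => (x i : ℝ))) = (r x : ℝ)) ∧
        ∀ x₁ x₂ : EuclideanSpace ℝ (Fin 2),
          |rR x₁ - rR x₂| ≤ Real.sqrt (2 * p) * ‖x₁ - x₂‖) := by
  haveI : Fact p.Prime := ⟨hp⟩
  -- extract a generator
  obtain ⟨⟨g, hgC⟩, hgen⟩ := hC
  have hCeq : C = AddSubgroup.zmultiples g := by
    apply le_antisymm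
    · intro x hx
      obtain ⟨n, hn⟩ := hgen ⟨x, hx⟩
      exact ⟨n, congrArg Subtype.val hn⟩
    · rw [AddSubgroup.zmultiples_le]
      exact hgC
  have hgne : g ≠ 0 := by
    intro h
    apply hCne
    rw [hCeq, h]
    simp
  have hp2 : (2 : ℝ) * p ≥ 2 := by
    have : (2 : ℝ) ≤ p := by exact_mod_cast hp.two_le
    nlinarith
  by_cases hg0 : g 0 = 0
  · -- g = (0, g1) with g1 ≠ 0 ; take r (x) = x 0
    have hg1 : g 1 ≠ 0 := by
      intro h
      apply hgne
      funext i
      fin_cases i <;> assumption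
    apply main_construction p hp C 1 0
    · push_cast; nlinarith
    · intro x
      push_cast
      simp only [one_mul, zero_mul, add_zero]
      rw [hCeq]
      constructor
      · intro hx0
        have : x = fun i => (x 1 * (g 1)⁻¹) * g i := by
          funext i
          fin_cases i
          · simp [hx0, hg0]
          · field_simp
            rfl
        rw [this]
        exact zmod_smul_mem_zmultiples p hp _ g
      · rintro ⟨n, rfl⟩
        simp [hg0]
  · -- g 0 ≠ 0 : slope m, Thue lemma
    set m : ZMod p := g 1 * (g 0)⁻¹ with hm
    obtain ⟨c, d, hcd, hd, hc2, hd2⟩ := thue_aux p hp (-m)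
    apply main_construction p hp C c d
    · nlinarith
    · intro x
      rw [hCeq]
      constructor
      · intro hx0
        have hx1 : x 1 = m * x 0 := by
          have h1 : (-m * d) * x 0 + d * x 1 = 0 := by rw [← hcd]; exact hx0
          have h2 : (d : ZMod p) * (x 1 - m * x 0) = 0 := by ring_nf; ring_nf at h1; linear_combination h1
          have := mul_eq_zero.mp h2
          rcases this with h | h
          · exact absurd h hd
          · linear_combination h
        have : x = fun i => (x 0 * (g 0)⁻¹) * g i := by
          funext i
          fin_cases i
          · field_simp
            rfl
          · show x 1 = x 0 * (g 0)⁻¹ * g 1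
            rw [hx1, hm]
            field_simp
        rw [this]
        exact zmod_smul_mem_zmultiples p hp _ g
      · rintro ⟨n, rfl⟩
        have hbase : (c : ZMod p) * g 0 + (d : ZMod p) * g 1 = 0 := by
          rw [hcd, hm]
          field_simp
          ring
        show (c : ZMod p) * (n • g) 0 + (d : ZMod p) * (n • g) 1 = 0
        have h0 : (n • g) 0 = n • (g 0) := rfl
        have h1 : (n • g) 1 = n • (g 1) := rfl
        rw [h0, h1, zsmul_eq_mul']
        rw [zsmul_eq_mul']
        calc (c : ZMod p) * (g 0 * n) + (d : ZMod p) * (g 1 * n)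
            = ((c : ZMod p) * g 0 + (d : ZMod p) * g 1) * n := by ring
          _ = 0 := by rw [hbase]; ring
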